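/- Let k be an infinite field and R = k[x,y] with homogeneous maximal ideal 𝔪 = (x,y). Let I be a nonzero proper monomial ideal of R that is full. Then there exists an ordering f₁, …, f_s of the minimal monomial generating set G(I) of I such that deg f₁ ≤ deg f₂ ≤ ⋯ ≤ deg f_s and, for every 1 ≤ j ≤ s, the ideal I_j = (f₁, …, f_j) is full. -/

import Mathlib

open MvPolynomial

noncomputable section

variable {k : Type*} [Field k]

/-- An ideal of a polynomial ring is homogeneous if it contains all homogeneous
components of its elements. -/
def IsHomogeneousIdeal {σ : Type*} (I : Ideal (MvPolynomial σ k)) : Prop :=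
  ∀ p ∈ I, ∀ d : ℕ, MvPolynomial.homogeneousComponent d p ∈ I

/-- The homogeneous maximal ideal `(x, y)` of `k[x,y]`. -/
def maxIdeal (k : Type*) [Field k] : Ideal (MvPolynomial (Fin 2) k) :=
  Ideal.span {X 0, X 1}

/-- A homogeneous ideal `I ⊆ k[x,y]` is full if `(I : z) = (I : 𝔪)` for some
linear form `z`. -/
def IsFull (I : Ideal (MvPolynomial (Fin 2) k)) : Prop :=
  ∃ z : MvPolynomial (Fin 2) k, z ≠ 0 ∧ z.IsHomogeneous 1 ∧
    Submodule.colon I (Ideal.span {z}) = Submodule.colon I (maxIdeal k)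

/-- The order `o(I)` of an ideal: the smallest degree of a nonzero homogeneous
element of `I`. -/
def ordDeg (I : Ideal (MvPolynomial (Fin 2) k)) : ℕ :=
  sInf {d : ℕ | ∃ p ∈ I, p ≠ 0 ∧ MvPolynomial.IsHomogeneous p d}

/-- A monomial ideal: an ideal generated by monomials. -/
def IsMonomialIdeal {σ : Type*} (I : Ideal (MvPolynomial σ k)) : Prop :=
  ∃ A : Set (σ →₀ ℕ), I = Ideal.span ((fun a => MvPolynomial.monomial a (1 : k)) '' A)

/-- The minimal monomial generating set `G(I)` of a monomial ideal: the monic monomials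
of `I` whose exponent vectors are minimal with respect to componentwise order
(equivalently, divisibility). -/
def minimalMonomialGens {σ : Type*} (I : Ideal (MvPolynomial σ k)) :
    Set (MvPolynomial σ k) :=
  (fun a => MvPolynomial.monomial a (1 : k)) ''
    {a : σ →₀ ℕ | MvPolynomial.monomial a (1 : k) ∈ I ∧
      ∀ b : σ →₀ ℕ, MvPolynomial.monomial b (1 : k) ∈ I → b ≤ a → b = a}

namespace FullAux
def pr (u v : ℕ) : Fin 2 →₀ ℕ := Finsupp.single 0 u + Finsupp.single 1 v

@[simp] lemma pr_apply0 (u v : ℕ) : pr u v 0 = u := by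
  simp [pr, Finsupp.single_apply]

@[simp] lemma pr_apply1 (u v : ℕ) : pr u v 1 = v := by
  simp [pr, Finsupp.single_apply]

lemma pr_eta (m : Fin 2 →₀ ℕ) : pr (m 0) (m 1) = m := by
  ext i; fin_cases i <;> simp


lemma degree_two (m : Fin 2 →₀ ℕ) : m.degree = m 0 + m 1 := by
  rw [Finsupp.degree_apply, Finset.sum_subset (Finset.subset_univ _)
    (by intro i _ h; simpa [Finsupp.mem_support_iff] using h)]
  exact Fin.sum_univ_two m

lemma pr_sum (u v : ℕ) : (pr u v).sum (fun _ e => e) = u + v := by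
  have h : (pr u v).sum (fun _ e => e) = (pr u v).degree := rfl
  rw [h, degree_two]; simp

lemma le_iff2 (m m' : Fin 2 →₀ ℕ) : m ≤ m' ↔ m 0 ≤ m' 0 ∧ m 1 ≤ m' 1 := by
  constructor
  · intro h; exact ⟨h 0, h 1⟩
  · rintro ⟨h0, h1⟩ i; fin_cases i <;> assumption

lemma pr_add (u v u' v' : ℕ) : pr u v + pr u' v' = pr (u + u') (v + v') := by
  ext i; fin_cases i <;> simp

lemma pr_inj {u v u' v' : ℕ} (h : pr u v = pr u' v') : u = u' ∧ v = v' := by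
  constructor
  · have := congrArg (fun m : Fin 2 →₀ ℕ => m 0) h; simpa using this
  · have := congrArg (fun m : Fin 2 →₀ ℕ => m 1) h; simpa using this

lemma pr_single0 (u : ℕ) : pr u 0 = Finsupp.single 0 u := by
  ext i; fin_cases i <;> simp

lemma pr_single1 (v : ℕ) : pr 0 v = Finsupp.single 1 v := by
  ext i; fin_cases i <;> simp

lemma pr_sub_single1 (a b : ℕ) : pr a b - Finsupp.single 1 1 = pr a (b - 1) := by
  ext i; fin_cases i <;> simp [Finsupp.tsub_apply, Finsupp.single_apply]

lemma pr_sub_single0 (a b : ℕ) : pr a b - Finsupp.single 0 1 = pr (a - 1) b := by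
  ext i; fin_cases i <;> simp [Finsupp.tsub_apply, Finsupp.single_apply]

variable {k : Type*} [Field k]

lemma monomial_mul_z (e : Fin 2 →₀ ℕ) (c α β : k) :
    monomial e c * (C α * X 0 + C β * X 1) =
      monomial (e + pr 1 0) (c * α) + monomial (e + pr 0 1) (c * β) := by
  rw [mul_add, C_mul_X_eq_monomial, C_mul_X_eq_monomial, monomial_mul, monomial_mul,
    pr_single0, pr_single1]

def geom (α β : k) (u v g : ℕ) : MvPolynomial (Fin 2) k :=
  ∑ r ∈ Finset.range g, monomial (pr (u + r) (v - 1 - r)) ((-α) ^ r * β ^ (g - 1 - r))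

lemma geom_succ (α β : k) (u v g : ℕ) :
    geom α β u v (g + 1) =
      C (-α) * geom α β (u + 1) (v - 1) g + monomial (pr u (v - 1)) (β ^ g) := by
  rw [geom, Finset.sum_range_succ']
  congr 1
  · rw [geom, Finset.mul_sum]
    refine Finset.sum_congr rfl (fun r _ => ?_)
    rw [C_mul_monomial]
    have e1 : u + (r + 1) = u + 1 + r := by omega
    have e2 : v - 1 - (r + 1) = v - 1 - 1 - r := by omega
    have e3 : g + 1 - 1 - (r + 1) = g - 1 - r := by omega
    rw [e1, e2, e3]
    congr 1
    ring
  · have e3 : g + 1 - 1 - 0 = g := by omega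
    rw [e3]
    simp

lemma geom_one (α β : k) (u v : ℕ) : geom α β u v 1 = monomial (pr u (v - 1)) 1 := by
  rw [geom]; simp

lemma geom_mul_z (α β : k) : ∀ g u v : ℕ, 1 ≤ g → g ≤ v →
    geom α β u v g * (C α * X 0 + C β * X 1) =
      monomial (pr u v) (β ^ g) - monomial (pr (u + g) (v - g)) ((-α) ^ g) := by
  intro g
  induction g with
  | zero => omega
  | succ g ih =>
    intro u v _ hgv
    rcases Nat.eq_zero_or_pos g with rfl | hg
    · rw [geom_one, monomial_mul_z, pr_add, pr_add, one_mul, one_mul]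
      have h1 : v - 1 + 0 = v - 1 := by omega
      have h2 : v - 1 + 1 = v := by omega
      rw [h1, h2, pow_one, pow_one, sub_eq_add_neg, ← map_neg, neg_neg, add_comm]
      norm_num
    · rw [geom_succ, add_mul, mul_assoc, ih (u + 1) (v - 1) hg (by omega), monomial_mul_z]
      rw [mul_sub, C_mul_monomial, C_mul_monomial, pr_add, pr_add]
      have h1 : v - 1 + 0 = v - 1 := by omega
      have h2 : v - 1 + 1 = v := by omega
      rw [h1, h2]
      have h3 : u + 1 + g = u + (g + 1) := by omega
      have h4 : v - 1 - g = v - (g + 1) := by omega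
      rw [h3, h4]
      have h5 : β ^ g * β = β ^ (g + 1) := by rw [pow_succ]
      rw [h5]
      rw [show (-α : k) * (-α)^g = (-α)^(g+1) from (pow_succ' _ _).symm]
      rw [show (-α : k) * β^g = -(β^g * α) by ring]
      rw [map_neg]
      abel


lemma geom_coeff (α β : k) (g u v r : ℕ) (hr : r < g) (hgv : g ≤ v) :
    coeff (pr (u + r) (v - 1 - r)) (geom α β u v g) = (-α) ^ r * β ^ (g - 1 - r) := by
  rw [geom, coeff_sum]
  rw [Finset.sum_eq_single r]
  · rw [coeff_monomial, if_pos rfl]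
  · intro r' _ hne
    rw [coeff_monomial, if_neg]
    intro hc
    have h := (pr_inj hc).1
    exact hne (by omega)
  · intro h
    exact absurd (Finset.mem_range.2 hr) h

lemma mem_iff_support {I : Ideal (MvPolynomial (Fin 2) k)} {A : Set (Fin 2 →₀ ℕ)}
    (hA : I = Ideal.span ((fun a => monomial a (1:k)) '' A)) (q : MvPolynomial (Fin 2) k) :
    q ∈ I ↔ ∀ m ∈ q.support, ∃ a ∈ A, a ≤ m := by
  rw [hA]; exact mem_ideal_span_monomial_image

lemma monomial_mem_of_le {I : Ideal (MvPolynomial (Fin 2) k)} {m m' : Fin 2 →₀ ℕ}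
    (hle : m ≤ m') (hm : monomial m (1:k) ∈ I) (c : k) : monomial m' c ∈ I := by
  have h : monomial m' c = monomial m (1:k) * monomial (m' - m) c := by
    rw [monomial_mul, one_mul, add_tsub_cancel_of_le hle]
  rw [h]; exact Ideal.mul_mem_right _ _ hm

lemma support_mem {I : Ideal (MvPolynomial (Fin 2) k)} {A : Set (Fin 2 →₀ ℕ)}
    (hA : I = Ideal.span ((fun a => monomial a (1:k)) '' A))
    {q : MvPolynomial (Fin 2) k} (hq : q ∈ I) {m : Fin 2 →₀ ℕ} (hm : m ∈ q.support) :
    monomial m (1:k) ∈ I := by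
  obtain ⟨a, haA, hale⟩ := (mem_iff_support hA q).1 hq m hm
  have : monomial a (1:k) ∈ I := by
    rw [hA]; exact Ideal.subset_span ⟨a, haA, rfl⟩
  exact monomial_mem_of_le hale this 1

lemma mem_of_support {I : Ideal (MvPolynomial (Fin 2) k)}
    {q : MvPolynomial (Fin 2) k} (h : ∀ m ∈ q.support, monomial m (1:k) ∈ I) : q ∈ I := by
  rw [q.as_sum]
  refine Ideal.sum_mem _ (fun m hm => ?_)
  have : (monomial m) (coeff m q) = C (coeff m q) * monomial m (1:k) := by
    rw [C_mul_monomial, mul_one]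
  rw [this]
  exact Ideal.mul_mem_left _ _ (h m hm)

/-- gap-freeness on each anti-diagonal -/
def GapFree (I : Ideal (MvPolynomial (Fin 2) k)) : Prop :=
  ∀ d u v w : ℕ, u ≤ v → v ≤ w → w ≤ d →
    monomial (pr u (d-u)) (1:k) ∈ I → monomial (pr w (d-w)) (1:k) ∈ I →
    monomial (pr v (d-v)) (1:k) ∈ I

lemma mem_colon_span_singleton {I : Ideal (MvPolynomial (Fin 2) k)}
    {z p : MvPolynomial (Fin 2) k} :
    p ∈ Submodule.colon I (Ideal.span {z}) ↔ p * z ∈ I := by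
  constructor
  · intro h
    have := Submodule.mem_colon.1 h z (Ideal.subset_span rfl)
    simpa [smul_eq_mul] using this
  · intro h
    refine Submodule.mem_colon.2 (fun q hq => ?_)
    obtain ⟨c, rfl⟩ := Ideal.mem_span_singleton'.1 hq
    have : p • (c * z) = c * (p * z) := by rw [smul_eq_mul]; ring
    rw [this]
    exact Ideal.mul_mem_left _ _ h

lemma mem_colon_max {I : Ideal (MvPolynomial (Fin 2) k)} {p : MvPolynomial (Fin 2) k} :
    p ∈ Submodule.colon I (maxIdeal k) ↔ p * X 0 ∈ I ∧ p * X 1 ∈ I := by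
  constructor
  · intro h
    constructor
    · have := Submodule.mem_colon.1 h (X 0) (Ideal.subset_span (Set.mem_insert _ _))
      simpa [smul_eq_mul] using this
    · have := Submodule.mem_colon.1 h (X 1) (Ideal.subset_span (Set.mem_insert_of_mem _ rfl))
      simpa [smul_eq_mul] using this
  · rintro ⟨h0, h1⟩
    refine Submodule.mem_colon.2 (fun q hq => ?_)
    obtain ⟨a, b, rfl⟩ := Ideal.mem_span_pair.1 hq
    have : p • (a * X 0 + b * X 1) = a * (p * X 0) + b * (p * X 1) := by rw [smul_eq_mul]; ring
    rw [this]
    exact Ideal.add_mem _ (Ideal.mul_mem_left _ _ h0) (Ideal.mul_mem_left _ _ h1)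

lemma single_cases {m : Fin 2 →₀ ℕ} (h : m 0 + m 1 = 1) :
    m = Finsupp.single 0 1 ∨ m = Finsupp.single 1 1 := by
  rcases Nat.le_one_iff_eq_zero_or_eq_one.1 (le_of_add_le_left h.le) with h0 | h0
  · right
    have h1 : m 1 = 1 := by omega
    rw [← pr_eta m, h0, h1, pr_single1]
  · left
    have h1 : m 1 = 0 := by omega
    rw [← pr_eta m, h0, h1, pr_single0]

lemma z_decomp {z : MvPolynomial (Fin 2) k} (h1 : z.IsHomogeneous 1) :
    z = C (coeff (pr 1 0) z) * X 0 + C (coeff (pr 0 1) z) * X 1 := by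
  have e10 : pr 1 0 = Finsupp.single 0 1 := pr_single0 1
  have e01 : pr 0 1 = Finsupp.single 1 1 := pr_single1 1
  have hne : (Finsupp.single 0 1 : Fin 2 →₀ ℕ) ≠ Finsupp.single 1 1 := by
    rw [← e10, ← e01]
    intro hc
    exact absurd (pr_inj hc).1 one_ne_zero
  ext m
  rw [coeff_add, C_mul_X_eq_monomial, C_mul_X_eq_monomial, coeff_monomial, coeff_monomial]
  by_cases hm0 : (Finsupp.single 0 1 : Fin 2 →₀ ℕ) = m
  · rw [if_pos hm0, if_neg (fun hc => hne (hm0.trans hc.symm)), e10, hm0, add_zero]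
  · by_cases hm1 : (Finsupp.single 1 1 : Fin 2 →₀ ℕ) = m
    · rw [if_pos hm1, if_neg hm0, e01, hm1, zero_add]
    · rw [if_neg hm0, if_neg hm1, add_zero]
      by_cases hd : m.degree = 1
      · rcases single_cases (by rw [← degree_two]; exact hd) with h | h
        · exact absurd h.symm hm0
        · exact absurd h.symm hm1
      · exact h1.coeff_eq_zero hd


lemma X1_eq : (X 1 : MvPolynomial (Fin 2) k) = monomial (pr 0 1) 1 := by
  rw [pr_single1]; rfl

lemma X0_eq : (X 0 : MvPolynomial (Fin 2) k) = monomial (pr 1 0) 1 := by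
  rw [pr_single0]; rfl

lemma gapFree_of_full {I : Ideal (MvPolynomial (Fin 2) k)} {A : Set (Fin 2 →₀ ℕ)}
    (hA : I = Ideal.span ((fun a => monomial a (1:k)) '' A)) (hfull : IsFull I) :
    GapFree I := by
  obtain ⟨z, hz0, hz1, hcolon⟩ := hfull
  set α := coeff (pr 1 0) z with hαdef
  set β := coeff (pr 0 1) z with hβdef
  have hzd : z = C α * X 0 + C β * X 1 := z_decomp hz1
  intro d u v w huv hvw hwd hu hw
  rcases eq_or_lt_of_le huv with rfl | huv
  · exact hu
  rcases eq_or_lt_of_le hvw with rfl | hvw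
  · exact hw
  by_cases hβ : β = 0
  · have hα : α ≠ 0 := by
      intro hα; apply hz0; rw [hzd, hα, hβ]; simp
    have key : ∀ t, t ≤ w - v → monomial (pr (w - t) (d - (w - t))) (1:k) ∈ I := by
      intro t
      induction t with
      | zero => intro _; simpa using hw
      | succ t ih =>
        intro ht
        have hprev := ih (by omega)
        have hk1 : w - t = (w - (t+1)) + 1 := by omega
        set kk := w - (t+1) with hkk
        rw [hk1] at hprev
        have hkkd : kk + 1 ≤ d := by omega
        have hkkw : kk + 1 ≤ w := by omega
        have hq : monomial (pr kk (d - kk - 1)) (1:k) * z ∈ I := by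
          rw [hzd, hβ, monomial_mul_z, pr_add, pr_add]
          rw [mul_zero, map_zero, add_zero, one_mul]
          rw [show d - kk - 1 + 0 = d - (kk + 1) by omega]
          exact monomial_mem_of_le le_rfl hprev α
        have hqc : monomial (pr kk (d - kk - 1)) (1:k) ∈ Submodule.colon I (maxIdeal k) := by
          rw [← hcolon]; exact mem_colon_span_singleton.2 hq
        have hy := (mem_colon_max.1 hqc).2
        rw [X1_eq, monomial_mul, pr_add, one_mul] at hy
        rw [show d - kk - 1 + 1 = d - kk by omega] at hy
        exact hy
    have := key (w - v) le_rfl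
    rwa [show w - (w - v) = v by omega] at this
  · by_cases hα : α = 0
    · have key : ∀ t, t ≤ v - u → monomial (pr (u + t) (d - (u + t))) (1:k) ∈ I := by
        intro t
        induction t with
        | zero => intro _; simpa using hu
        | succ t ih =>
          intro ht
          have hprev := ih (by omega)
          have hq : monomial (pr (u + t) (d - (u + t) - 1)) (1:k) * z ∈ I := by
            rw [hzd, hα, monomial_mul_z, pr_add, pr_add]
            rw [show d - (u + t) - 1 + 1 = d - (u + t) by omega]
            rw [mul_zero, map_zero, zero_add, one_mul]
            exact monomial_mem_of_le le_rfl hprev β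
          have hqc : monomial (pr (u + t) (d - (u + t) - 1)) (1:k) ∈
              Submodule.colon I (maxIdeal k) := by
            rw [← hcolon]; exact mem_colon_span_singleton.2 hq
          have hx := (mem_colon_max.1 hqc).1
          rw [X0_eq, monomial_mul, pr_add, one_mul] at hx
          rw [show u + t + 1 = u + (t + 1) by omega,
            show d - (u + t) - 1 = d - (u + (t + 1)) by omega] at hx
          exact hx
      have := key (v - u) le_rfl
      rwa [show u + (v - u) = v by omega] at this
    · set g := w - u with hgdef
      have hg1 : 1 ≤ g := by omega
      have hgd : g ≤ d - u := by omega
      have hpz : geom α β u (d - u) g * z ∈ I := by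
        rw [hzd, geom_mul_z α β g u (d - u) hg1 hgd]
        refine sub_mem ?_ ?_
        · exact monomial_mem_of_le le_rfl hu _
        · rw [show u + g = w by omega, show d - u - g = d - w by omega]
          exact monomial_mem_of_le le_rfl hw _
      have hpc : geom α β u (d - u) g ∈ Submodule.colon I (maxIdeal k) := by
        rw [← hcolon]; exact mem_colon_span_singleton.2 hpz
      have hy := (mem_colon_max.1 hpc).2
      have hcoeff : coeff (pr v (d - v)) (geom α β u (d - u) g * X 1) =
          (-α) ^ (v - u) * β ^ (g - 1 - (v - u)) := by
        classical
        rw [coeff_mul_X', if_pos]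
        · rw [pr_sub_single1]
          have hgc := geom_coeff α β g u (d - u) (v - u) (by omega) hgd
          rwa [show u + (v - u) = v by omega,
            show d - u - 1 - (v - u) = d - v - 1 by omega] at hgc
        · rw [Finsupp.mem_support_iff, pr_apply1]
          omega
      have hne : coeff (pr v (d - v)) (geom α β u (d - u) g * X 1) ≠ 0 := by
        rw [hcoeff]
        exact mul_ne_zero (pow_ne_zero _ (neg_ne_zero.2 hα)) (pow_ne_zero _ hβ)
      exact support_mem hA hy (mem_support_iff.2 hne)

lemma coeff_zero_of_not_mem {I : Ideal (MvPolynomial (Fin 2) k)} {A : Set (Fin 2 →₀ ℕ)}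
    (hA : I = Ideal.span ((fun a => monomial a (1:k)) '' A))
    {q : MvPolynomial (Fin 2) k} (hq : q ∈ I) {mm : Fin 2 →₀ ℕ}
    (h : monomial mm (1:k) ∉ I) : coeff mm q = 0 := by
  by_contra hc
  exact h (support_mem hA hq (mem_support_iff.2 hc))

lemma coeff_mul_X0X1 (p : MvPolynomial (Fin 2) k) (a b : ℕ) :
    coeff (pr a b) (p * (X 0 + X 1)) =
      (if 1 ≤ a then coeff (pr (a-1) b) p else 0)
        + (if 1 ≤ b then coeff (pr a (b-1)) p else 0) := by
  classical
  rw [mul_add, coeff_add, coeff_mul_X', coeff_mul_X', pr_sub_single0, pr_sub_single1]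
  congr 1
  · refine if_congr ?_ rfl rfl
    rw [Finsupp.mem_support_iff, pr_apply0]
    omega
  · refine if_congr ?_ rfl rfl
    rw [Finsupp.mem_support_iff, pr_apply1]
    omega

lemma full_of_gapFree {I : Ideal (MvPolynomial (Fin 2) k)} {A : Set (Fin 2 →₀ ℕ)}
    (hA : I = Ideal.span ((fun a => monomial a (1:k)) '' A)) (hgf : GapFree I) :
    IsFull I := by
  refine ⟨X 0 + X 1, ?_, (isHomogeneous_X _ _).add (isHomogeneous_X _ _), ?_⟩
  · intro h
    have h1 : coeff (pr 1 0) (X 0 + X 1 : MvPolynomial (Fin 2) k) = 1 := by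
      rw [coeff_add, X0_eq, X1_eq, coeff_monomial, coeff_monomial, if_pos rfl, if_neg, add_zero]
      intro hc
      exact one_ne_zero ((pr_inj hc).2)
    rw [h, coeff_zero] at h1
    exact zero_ne_one h1
  · apply le_antisymm
    · intro p hp
      have hpz : p * (X 0 + X 1) ∈ I := by
        have := mem_colon_span_singleton.1 hp
        exact this
      have hkey : ∀ m ∈ p.support,
          monomial (m + pr 1 0) (1:k) ∈ I ∧ monomial (m + pr 0 1) (1:k) ∈ I := by
        intro m hm
        obtain ⟨u, v, rfl⟩ : ∃ u v, pr u v = m := ⟨m 0, m 1, pr_eta m⟩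
        have hcm : coeff (pr u v) p ≠ 0 := mem_support_iff.1 hm
        obtain ⟨d, hd⟩ : ∃ d, d = u + v + 1 := ⟨_, rfl⟩
        have hud : u < d := by omega
        -- E1 : some position ≤ u lies in I
        have E1 : ∃ w1, w1 ≤ u ∧ monomial (pr w1 (d - w1)) (1:k) ∈ I := by
          by_contra hno
          push_neg at hno
          have hzz : ∀ ww, ww ≤ u → coeff (pr ww (d - 1 - ww)) p = 0 := by
            intro ww
            induction ww with
            | zero =>
              intro _
              have h0 := coeff_zero_of_not_mem hA hpz (hno 0 (by omega))
              rw [coeff_mul_X0X1] at h0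
              rw [if_neg (by omega), zero_add, if_pos (by omega)] at h0
              rw [show d - 0 - 1 = d - 1 - 0 by omega] at h0
              exact h0
            | succ ww ih =>
              intro hwu
              have h0 := coeff_zero_of_not_mem hA hpz (hno (ww + 1) hwu)
              rw [coeff_mul_X0X1] at h0
              rw [if_pos (by omega), if_pos (by omega)] at h0
              rw [show ww + 1 - 1 = ww by omega,
                show d - (ww + 1) = d - 1 - ww by omega] at h0
              rw [ih (by omega), zero_add] at h0
              rw [show d - 1 - ww - 1 = d - 1 - (ww + 1) by omega] at h0
              exact h0
          have := hzz u le_rfl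
          rw [show d - 1 - u = v by omega] at this
          exact hcm this
        -- E2 : some position in [u+1, d] lies in I
        have E2 : ∃ w2, u + 1 ≤ w2 ∧ w2 ≤ d ∧ monomial (pr w2 (d - w2)) (1:k) ∈ I := by
          by_contra hno
          push_neg at hno
          have hzz : ∀ t, t ≤ d - 1 - u → coeff (pr (d - 1 - t) (d - 1 - (d - 1 - t))) p = 0 := by
            intro t
            induction t with
            | zero =>
              intro _
              have h0 := coeff_zero_of_not_mem hA hpz (hno d (by omega) le_rfl)
              rw [coeff_mul_X0X1] at h0
              rw [if_pos (by omega), if_neg (by omega), add_zero] at h0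
              rw [show d - d = d - 1 - (d - 1 - 0) by omega,
                show d - 1 = d - 1 - 0 by omega] at h0
              exact h0
            | succ t ih =>
              intro htu
              have h0 := coeff_zero_of_not_mem hA hpz (hno (d - 1 - t) (by omega) (by omega))
              rw [coeff_mul_X0X1] at h0
              rw [if_pos (by omega), if_pos (by omega)] at h0
              have e1 : d - (d - 1 - t) - 1 = d - 1 - (d - 1 - t) := by omega
              rw [e1] at h0
              rw [ih (by omega), add_zero] at h0
              rw [show d - 1 - t - 1 = d - 1 - (t + 1) by omega,
                show d - (d - 1 - t) = d - 1 - (d - 1 - (t + 1)) by omega] at h0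
              exact h0
          have := hzz (d - 1 - u) le_rfl
          rw [show d - 1 - (d - 1 - u) = u by omega] at this
          rw [show d - 1 - u = v by omega] at this
          exact hcm this
        obtain ⟨w1, hw1u, hw1I⟩ := E1
        obtain ⟨w2, hw2u, hw2d, hw2I⟩ := E2
        constructor
        · have := hgf d w1 (u + 1) w2 (by omega) (by omega) hw2d hw1I hw2I
          rw [show d - (u + 1) = v by omega] at this
          rw [show pr u v + pr 1 0 = pr (u + 1) v by rw [pr_add, add_zero]]
          exact this
        · have := hgf d w1 u w2 hw1u (by omega) hw2d hw1I hw2I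
          rw [show d - u = v + 1 by omega] at this
          rw [show pr u v + pr 0 1 = pr u (v + 1) by rw [pr_add, add_zero]]
          exact this
      refine mem_colon_max.2 ⟨?_, ?_⟩
      · apply mem_of_support
        intro m' hm'
        classical
        have hc' := mem_support_iff.1 hm'
        rw [coeff_mul_X'] at hc'
        by_cases h0 : (0 : Fin 2) ∈ m'.support
        · rw [if_pos h0] at hc'
          have hmm : m' - Finsupp.single 0 1 ∈ p.support := mem_support_iff.2 hc'
          have hrec : m' = (m' - Finsupp.single 0 1) + pr 1 0 := by
            rw [pr_single0]
            rw [tsub_add_cancel_of_le]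
            rw [Finsupp.single_le_iff]
            rw [Finsupp.mem_support_iff] at h0
            omega
          rw [hrec]
          exact (hkey _ hmm).1
        · rw [if_neg h0] at hc'
          exact absurd rfl hc'
      · apply mem_of_support
        intro m' hm'
        classical
        have hc' := mem_support_iff.1 hm'
        rw [coeff_mul_X'] at hc'
        by_cases h0 : (1 : Fin 2) ∈ m'.support
        · rw [if_pos h0] at hc'
          have hmm : m' - Finsupp.single 1 1 ∈ p.support := mem_support_iff.2 hc'
          have hrec : m' = (m' - Finsupp.single 1 1) + pr 0 1 := by
            rw [pr_single1]
            rw [tsub_add_cancel_of_le]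
            rw [Finsupp.single_le_iff]
            rw [Finsupp.mem_support_iff] at h0
            omega
          rw [hrec]
          exact (hkey _ hmm).2
        · rw [if_neg h0] at hc'
          exact absurd rfl hc'
    · intro p hp
      refine mem_colon_span_singleton.2 ?_
      rw [mul_add]
      exact add_mem (mem_colon_max.1 hp).1 (mem_colon_max.1 hp).2

lemma minset_lt {a b : Fin 2 →₀ ℕ} (hle : b ≤ a) (hne : b ≠ a) : b 0 + b 1 < a 0 + a 1 := by
  have h0 := ((le_iff2 b a).1 hle).1
  have h1 := ((le_iff2 b a).1 hle).2
  have : ¬(b 0 = a 0 ∧ b 1 = a 1) := by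
    rintro ⟨e0, e1⟩
    exact hne (by rw [← pr_eta b, e0, e1, pr_eta])
  omega

lemma span_minGens {I : Ideal (MvPolynomial (Fin 2) k)} {A : Set (Fin 2 →₀ ℕ)}
    (hA : I = Ideal.span ((fun a => monomial a (1:k)) '' A)) :
    I = Ideal.span ((fun a => monomial a (1:k)) ''
      {a | monomial a (1:k) ∈ I ∧ ∀ b, monomial b (1:k) ∈ I → b ≤ a → b = a}) := by
  have key : ∀ n (a : Fin 2 →₀ ℕ), a 0 + a 1 ≤ n → monomial a (1:k) ∈ I →
      monomial a (1:k) ∈ Ideal.span ((fun a => monomial a (1:k)) ''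
        {a | monomial a (1:k) ∈ I ∧ ∀ b, monomial b (1:k) ∈ I → b ≤ a → b = a}) := by
    intro n
    induction n with
    | zero =>
      intro a han haI
      by_cases hmin : ∀ b, monomial b (1:k) ∈ I → b ≤ a → b = a
      · exact Ideal.subset_span ⟨a, ⟨haI, hmin⟩, rfl⟩
      · push_neg at hmin
        obtain ⟨b, hbI, hble, hbne⟩ := hmin
        exact absurd (minset_lt hble hbne) (by omega)
    | succ n ih =>
      intro a han haI
      by_cases hmin : ∀ b, monomial b (1:k) ∈ I → b ≤ a → b = a
      · exact Ideal.subset_span ⟨a, ⟨haI, hmin⟩, rfl⟩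
      · push_neg at hmin
        obtain ⟨b, hbI, hble, hbne⟩ := hmin
        have hlt := minset_lt hble hbne
        have hbspan := ih b (by omega) hbI
        have heq : monomial a (1:k) = monomial b (1:k) * monomial (a - b) 1 := by
          rw [monomial_mul, one_mul, add_tsub_cancel_of_le hble]
        rw [heq]
        exact Ideal.mul_mem_right _ _ hbspan
  apply le_antisymm
  · nth_rewrite 1 [hA]
    rw [Ideal.span_le]
    rintro x ⟨a, haA, rfl⟩
    exact key (a 0 + a 1) a le_rfl (by rw [hA]; exact Ideal.subset_span ⟨a, haA, rfl⟩)
  · rw [Ideal.span_le]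
    rintro x ⟨a, ⟨haI, _⟩, rfl⟩
    exact haI

lemma minGens_finite (I : Ideal (MvPolynomial (Fin 2) k)) :
    Set.Finite {a : Fin 2 →₀ ℕ | monomial a (1:k) ∈ I ∧
      ∀ b, monomial b (1:k) ∈ I → b ≤ a → b = a} := by
  set S := {a : Fin 2 →₀ ℕ | monomial a (1:k) ∈ I ∧
      ∀ b, monomial b (1:k) ∈ I → b ≤ a → b = a} with hS
  rcases Set.eq_empty_or_nonempty S with he | ⟨a₀, ha₀⟩
  · rw [he]; exact Set.finite_empty
  have hinj0 : Set.InjOn (fun a : Fin 2 →₀ ℕ => a 0) S := by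
    intro a ha a' ha' h
    rcases le_total (a 1) (a' 1) with hc | hc
    · exact (ha'.2 a ha.1 ((le_iff2 a a').2 ⟨le_of_eq h, hc⟩))
    · exact (ha.2 a' ha'.1 ((le_iff2 a' a).2 ⟨le_of_eq h.symm, hc⟩)).symm
  have hinj1 : Set.InjOn (fun a : Fin 2 →₀ ℕ => a 1) S := by
    intro a ha a' ha' h
    rcases le_total (a 0) (a' 0) with hc | hc
    · exact (ha'.2 a ha.1 ((le_iff2 a a').2 ⟨hc, le_of_eq h⟩))
    · exact (ha.2 a' ha'.1 ((le_iff2 a' a).2 ⟨hc, le_of_eq h.symm⟩)).symm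
  have hsub : S ⊆ {a ∈ S | a 0 ≤ a₀ 0} ∪ {a ∈ S | a 1 ≤ a₀ 1} := by
    intro a ha
    by_contra hni
    simp only [Set.mem_union, Set.mem_setOf_eq] at hni
    push_neg at hni
    have h01 : a₀ ≤ a := (le_iff2 a₀ a).2 ⟨(hni.1 ha).le, (hni.2 ha).le⟩
    have heq := ha.2 a₀ ha₀.1 h01
    have h1 := hni.1 ha
    rw [heq] at h1
    omega
  refine Set.Finite.subset (Set.Finite.union ?_ ?_) hsub
  · refine Set.Finite.of_finite_image ?_ (hinj0.mono (fun x hx => hx.1))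
    refine Set.Finite.subset (Set.finite_Iic (a₀ 0)) ?_
    rintro x ⟨a, ⟨_, h⟩, rfl⟩
    exact h
  · refine Set.Finite.of_finite_image ?_ (hinj1.mono (fun x hx => hx.1))
    refine Set.Finite.subset (Set.finite_Iic (a₀ 1)) ?_
    rintro x ⟨a, ⟨_, h⟩, rfl⟩
    exact h

section Unimodal

variable {I : Ideal (MvPolynomial (Fin 2) k)} {s : ℕ} {E : Fin s → (Fin 2 →₀ ℕ)}

/-- no degree drop after an earlier smaller degree -/
lemma no_late_drop (hGF : GapFree I)
    (hchar : ∀ m, monomial m (1:k) ∈ I ↔ ∃ t, E t ≤ m)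
    (ha : ∀ {t t' : Fin s}, t < t' → (E t') 0 < (E t) 0)
    (hb : ∀ {t t' : Fin s}, t < t' → (E t) 1 < (E t') 1)
    {l j j1 : Fin s} (hlj : l < j) (hjj1 : j < j1) (hcons : ∀ t, j < t → j1 ≤ t)
    (hdec : (E j1) 0 + (E j1) 1 < (E j) 0 + (E j) 1)
    (hld : (E l) 0 + (E l) 1 < (E j) 0 + (E j) 1) : False := by
  obtain ⟨d, hd⟩ : ∃ d, d = (E j) 0 + (E j) 1 - 1 := ⟨_, rfl⟩
  have haj1 := ha hjj1
  have hbj1 := hb hjj1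
  have hbl := hb hlj
  have hal := ha hlj
  have h1 : monomial (pr ((E j1) 0) (d - (E j1) 0)) (1:k) ∈ I := by
    refine (hchar _).2 ⟨j1, (le_iff2 _ _).2 ⟨by simp, ?_⟩⟩
    rw [pr_apply1]
    omega
  have h2 : monomial (pr (d - (E l) 1) (d - (d - (E l) 1))) (1:k) ∈ I := by
    refine (hchar _).2 ⟨l, (le_iff2 _ _).2 ⟨?_, ?_⟩⟩
    · rw [pr_apply0]; omega
    · rw [pr_apply1]; omega
  have h3 := hGF d ((E j1) 0) ((E j) 0 - 1) (d - (E l) 1)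
    (by omega) (by omega) (by omega) h1 h2
  rw [show d - ((E j) 0 - 1) = (E j) 1 by omega] at h3
  obtain ⟨t, ht⟩ := (hchar _).1 h3
  have ht0 : (E t) 0 ≤ (E j) 0 - 1 := by
    have := ((le_iff2 _ _).1 ht).1; simpa using this
  have ht1 : (E t) 1 ≤ (E j) 1 := by
    have := ((le_iff2 _ _).1 ht).2; simpa using this
  have htj : j < t := by
    rcases lt_trichotomy t j with hc | hc | hc
    · have := ha hc; omega
    · subst hc; omega
    · exact hc
  have hj1t := hcons t htj
  rcases eq_or_lt_of_le hj1t with rfl | hc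
  · omega
  · have := hb hc; omega

/-- no degree rise before a later smaller degree -/
lemma no_early_rise (hGF : GapFree I)
    (hchar : ∀ m, monomial m (1:k) ∈ I ↔ ∃ t, E t ≤ m)
    (ha : ∀ {t t' : Fin s}, t < t' → (E t') 0 < (E t) 0)
    (hb : ∀ {t t' : Fin s}, t < t' → (E t) 1 < (E t') 1)
    {j j1 l : Fin s} (hjj1 : j < j1) (hcons : ∀ t, j < t → j1 ≤ t) (hj1l : j1 < l)
    (hinc : (E j) 0 + (E j) 1 < (E j1) 0 + (E j1) 1)
    (hld : (E l) 0 + (E l) 1 < (E j1) 0 + (E j1) 1) : False := by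
  obtain ⟨d, hd⟩ : ∃ d, d = (E j1) 0 + (E j1) 1 - 1 := ⟨_, rfl⟩
  have haj1 := ha hjj1
  have hbj1 := hb hjj1
  have hbl := hb hj1l
  have hal := ha hj1l
  have h1 : monomial (pr ((E l) 0) (d - (E l) 0)) (1:k) ∈ I := by
    refine (hchar _).2 ⟨l, (le_iff2 _ _).2 ⟨by simp, ?_⟩⟩
    rw [pr_apply1]
    omega
  have h2 : monomial (pr (d - (E j) 1) (d - (d - (E j) 1))) (1:k) ∈ I := by
    refine (hchar _).2 ⟨j, (le_iff2 _ _).2 ⟨?_, ?_⟩⟩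
    · rw [pr_apply0]; omega
    · rw [pr_apply1]; omega
  have h3 := hGF d ((E l) 0) ((E j1) 0) (d - (E j) 1)
    (by omega) (by omega) (by omega) h1 h2
  rw [show d - (E j1) 0 = (E j1) 1 - 1 by omega] at h3
  obtain ⟨t, ht⟩ := (hchar _).1 h3
  have ht0 : (E t) 0 ≤ (E j1) 0 := by
    have := ((le_iff2 _ _).1 ht).1; simpa using this
  have ht1 : (E t) 1 ≤ (E j1) 1 - 1 := by
    have := ((le_iff2 _ _).1 ht).2; simpa using this
  have htj1 : t < j1 := by
    rcases lt_trichotomy t j1 with hc | hc | hc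
    · exact hc
    · subst hc; omega
    · have := hb hc; omega
  have htj : t ≤ j := by
    by_contra hc
    exact absurd (hcons t (lt_of_not_ge hc)) (by omega)
  rcases eq_or_lt_of_le htj with rfl | hc
  · omega
  · have := ha hc; omega

end Unimodal

lemma monomial_mem_span_iff {A : Set (Fin 2 →₀ ℕ)} {m : Fin 2 →₀ ℕ} :
    monomial m (1:k) ∈ Ideal.span ((fun a => monomial a (1:k)) '' A) ↔ ∃ a ∈ A, a ≤ m := by
  classical
  rw [mem_ideal_span_monomial_image]
  constructor
  · intro h
    refine h m ?_
    rw [support_monomial, if_neg (one_ne_zero : (1:k) ≠ 0)]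
    exact Finset.mem_singleton_self m
  · intro h m' hm'
    rw [support_monomial, if_neg (one_ne_zero : (1:k) ≠ 0), Finset.mem_singleton] at hm'
    subst hm'
    exact h

lemma segment_full {I : Ideal (MvPolynomial (Fin 2) k)} {s : ℕ} {E : Fin s → (Fin 2 →₀ ℕ)}
    (hGF : GapFree I)
    (hchar : ∀ m, monomial m (1:k) ∈ I ↔ ∃ t : Fin s, E t ≤ m)
    (ha : ∀ {t t' : Fin s}, t < t' → (E t') 0 < (E t) 0)
    (hb : ∀ {t t' : Fin s}, t < t' → (E t) 1 < (E t') 1)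
    (T : Set (Fin s)) (lo hi : Fin s) (hloT : lo ∈ T) (hhiT : hi ∈ T)
    (hTlo : ∀ t ∈ T, lo ≤ t) (hThi : ∀ t ∈ T, t ≤ hi)
    (hTint : ∀ t : Fin s, lo ≤ t → t ≤ hi → t ∈ T) :
    IsFull (Ideal.span ((fun a => monomial a (1:k)) '' (E '' T))) := by
  refine full_of_gapFree rfl ?_
  intro d u v w huv hvw hwd hu hw
  obtain ⟨a1, ⟨t1, ht1T, rfl⟩, hle1⟩ := monomial_mem_span_iff.1 hu
  obtain ⟨a2, ⟨t2, ht2T, rfl⟩, hle2⟩ := monomial_mem_span_iff.1 hw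
  have hle1' := (le_iff2 _ _).1 hle1
  have hle2' := (le_iff2 _ _).1 hle2
  rw [pr_apply0] at hle1' hle2'
  rw [pr_apply1] at hle1' hle2'
  have hvI : monomial (pr v (d - v)) (1:k) ∈ I := by
    refine hGF d u v w huv hvw hwd ((hchar _).2 ⟨t1, hle1⟩) ((hchar _).2 ⟨t2, hle2⟩)
  obtain ⟨t0, ht0⟩ := (hchar _).1 hvI
  have ht0' := (le_iff2 _ _).1 ht0
  rw [pr_apply0] at ht0'
  rw [pr_apply1] at ht0'
  have hfin : ∃ t ∈ T, E t ≤ pr v (d - v) := by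
    rcases lt_or_ge t0 lo with hc | hc
    · refine ⟨lo, hloT, (le_iff2 _ _).2 ⟨?_, ?_⟩⟩
      · rw [pr_apply0]
        have := ha hc
        omega
      · rw [pr_apply1]
        have hlt2 : (E lo) 1 ≤ (E t2) 1 := by
          rcases eq_or_lt_of_le (hTlo t2 ht2T) with rfl | hlt
          · exact le_rfl
          · exact (hb hlt).le
        omega
    · rcases le_or_gt t0 hi with hc2 | hc2
      · exact ⟨t0, hTint t0 hc hc2, ht0⟩
      · refine ⟨hi, hhiT, (le_iff2 _ _).2 ⟨?_, ?_⟩⟩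
        · rw [pr_apply0]
          have hlt1 : (E hi) 0 ≤ (E t1) 0 := by
            rcases eq_or_lt_of_le (hThi t1 ht1T) with rfl | hlt
            · exact le_rfl
            · exact (ha hlt).le
          omega
        · rw [pr_apply1]
          have := hb hc2
          omega
  obtain ⟨t, htT, htle⟩ := hfin
  have hmem : monomial (E t) (1:k) ∈
      Ideal.span ((fun a => monomial a (1:k)) '' (E '' T)) :=
    Ideal.subset_span ⟨E t, ⟨t, htT, rfl⟩, rfl⟩
  exact monomial_mem_of_le htle hmem 1

end FullAux

open FullAux

theorem full_initial_segments_order {k : Type*} [Field k] [Infinite k]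
    (I : Ideal (MvPolynomial (Fin 2) k))
    (hI0 : I ≠ ⊥) (hItop : I ≠ ⊤)
    (hmon : IsMonomialIdeal I) (hfull : IsFull I) :
    ∃ (s : ℕ) (f : Fin s → MvPolynomial (Fin 2) k),
      Function.Injective f ∧
      Set.range f = minimalMonomialGens I ∧
      (∀ i j : Fin s, i ≤ j → (f i).totalDegree ≤ (f j).totalDegree) ∧
      ∀ j : Fin s, IsFull (Ideal.span (f '' {l : Fin s | l ≤ j})) := by
  classical
  obtain ⟨A, hA⟩ := hmon
  have hGF : GapFree I := gapFree_of_full hA hfull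
  have hspan := span_minGens hA
  have hfin := minGens_finite I
  set S := {a : Fin 2 →₀ ℕ | monomial a (1:k) ∈ I ∧
      ∀ b, monomial b (1:k) ∈ I → b ≤ a → b = a} with hSdef
  have hSne : S.Nonempty := by
    rcases Set.eq_empty_or_nonempty S with he | h
    · exfalso
      apply hI0
      rw [hspan, he]
      simp
    · exact h
  set F : Finset (Fin 2 →₀ ℕ) := hfin.toFinset with hFdef
  have hFS : ∀ a, a ∈ F ↔ a ∈ S := fun a => hfin.mem_toFinset
  set ψ : (Fin 2 →₀ ℕ) → Lex (ℕ × ℕ) := fun a => toLex (a 1, a 0) with hψ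
  set F' : Finset (Lex (ℕ × ℕ)) := F.image ψ with hF'
  set s := F'.card with hs
  set e := F'.orderIsoOfFin hs.symm with he
  set E : Fin s → (Fin 2 →₀ ℕ) :=
    fun j => pr (ofLex (e j : Lex (ℕ × ℕ))).2 (ofLex (e j : Lex (ℕ × ℕ))).1 with hE
  have hE0 : ∀ j, (E j) 0 = (ofLex (e j : Lex (ℕ × ℕ))).2 := fun j => pr_apply0 _ _
  have hE1 : ∀ j, (E j) 1 = (ofLex (e j : Lex (ℕ × ℕ))).1 := fun j => pr_apply1 _ _
  have hψE : ∀ j, ψ (E j) = (e j : Lex (ℕ × ℕ)) := by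
    intro j
    rw [show ψ (E j) = toLex ((E j) 1, (E j) 0) from rfl, hE1 j, hE0 j, Prod.mk.eta,
      toLex_ofLex]
  have hES : ∀ j, E j ∈ S := by
    intro j
    obtain ⟨a, haF, hae⟩ := Finset.mem_image.1 ((e j).2)
    have hEa : E j = a := by
      have h1 : ofLex (e j : Lex (ℕ × ℕ)) = (a 1, a 0) := by rw [← hae]; rfl
      show pr (ofLex (e j : Lex (ℕ × ℕ))).2 (ofLex (e j : Lex (ℕ × ℕ))).1 = a
      rw [h1]
      exact pr_eta a
    rw [hEa]
    exact (hFS a).1 haF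
  have hEsurj : ∀ a ∈ S, ∃ j, E j = a := by
    intro a haS
    have hmem : ψ a ∈ F' := Finset.mem_image_of_mem ψ ((hFS a).2 haS)
    obtain ⟨j, hj⟩ := e.surjective ⟨ψ a, hmem⟩
    refine ⟨j, ?_⟩
    have h1 : ofLex (e j : Lex (ℕ × ℕ)) = (a 1, a 0) := by rw [hj]; rfl
    show pr (ofLex (e j : Lex (ℕ × ℕ))).2 (ofLex (e j : Lex (ℕ × ℕ))).1 = a
    rw [h1]
    exact pr_eta a
  have hblt : ∀ {j j' : Fin s}, j < j' → (E j) 1 < (E j') 1 := by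
    intro j j' hjj
    have hlt : (e j : Lex (ℕ × ℕ)) < (e j' : Lex (ℕ × ℕ)) :=
      Subtype.coe_lt_coe.2 (e.strictMono hjj)
    rw [← toLex_ofLex (e j : Lex (ℕ × ℕ)), ← toLex_ofLex (e j' : Lex (ℕ × ℕ)),
      Prod.Lex.lt_iff] at hlt
    rcases hlt with h | ⟨h1, h2⟩
    · rw [hE1 j, hE1 j']
      exact h
    · exfalso
      have hle : E j ≤ E j' := (le_iff2 _ _).2 ⟨?_, ?_⟩
      · have heq := (hES j').2 (E j) (hES j).1 hle
        have hee : (e j : Lex (ℕ × ℕ)) = (e j' : Lex (ℕ × ℕ)) := by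
          rw [← hψE, ← hψE, heq]
        exact absurd (e.injective (Subtype.coe_injective hee)) (ne_of_lt hjj)
      · rw [hE0 j, hE0 j']
        exact h2.le
      · rw [hE1 j, hE1 j']
        exact h1.le
  have halt : ∀ {j j' : Fin s}, j < j' → (E j') 0 < (E j) 0 := by
    intro j j' hjj
    by_contra hc
    push_neg at hc
    have hle : E j ≤ E j' := (le_iff2 _ _).2 ⟨hc, (hblt hjj).le⟩
    have heq := (hES j').2 (E j) (hES j).1 hle
    have hx := hblt hjj
    rw [heq] at hx
    exact lt_irrefl _ hx
  have hchar : ∀ m, monomial m (1:k) ∈ I ↔ ∃ t : Fin s, E t ≤ m := by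
    intro m
    constructor
    · intro hm
      rw [hspan] at hm
      obtain ⟨a, haS, hale⟩ := monomial_mem_span_iff.1 hm
      obtain ⟨j, hj⟩ := hEsurj a haS
      exact ⟨j, hj ▸ hale⟩
    · rintro ⟨t, hle⟩
      exact monomial_mem_of_le hle (hES t).1 1
  have hspos : 0 < s := by
    refine Finset.card_pos.2 ?_
    obtain ⟨a, haS⟩ := hSne
    exact ⟨ψ a, Finset.mem_image_of_mem ψ ((hFS a).2 haS)⟩
  set dg : Fin s → ℕ := fun j => (E j) 0 + (E j) 1 with hdg
  obtain ⟨jstar, -, hjs⟩ := Finset.exists_min_image (Finset.univ : Finset (Fin s)) dg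
    ⟨⟨0, hspos⟩, Finset.mem_univ _⟩
  have hjs' : ∀ j : Fin s, dg jstar ≤ dg j := fun j => hjs j (Finset.mem_univ j)
  have hRcons : ∀ j : Fin s, jstar ≤ j → ∀ (h1 : j.1 + 1 < s), dg j ≤ dg ⟨j.1 + 1, h1⟩ := by
    intro j hj h1
    by_contra hdrop
    push_neg at hdrop
    rcases eq_or_lt_of_le hj with rfl | hlt
    · exact absurd (hjs' ⟨jstar.1 + 1, h1⟩) (not_le.2 hdrop)
    · refine no_late_drop hGF hchar halt hblt hlt
        (show j < ⟨j.1 + 1, h1⟩ from by rw [Fin.lt_def]; exact Nat.lt_succ_self _)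
        (fun t ht => by rw [Fin.le_def]; rw [Fin.lt_def] at ht; exact ht) hdrop ?_
      exact lt_of_le_of_lt (hjs' ⟨j.1 + 1, h1⟩) hdrop
  have hLcons : ∀ j : Fin s, ∀ (h1 : j.1 + 1 < s), (⟨j.1 + 1, h1⟩ : Fin s) ≤ jstar →
      dg ⟨j.1 + 1, h1⟩ ≤ dg j := by
    intro j h1 hj
    by_contra hrise
    push_neg at hrise
    rcases eq_or_lt_of_le hj with heq | hlt
    · rw [heq] at hrise
      exact absurd (hjs' j) (not_le.2 hrise)
    · refine no_early_rise hGF hchar halt hblt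
        (show j < ⟨j.1 + 1, h1⟩ from by rw [Fin.lt_def]; exact Nat.lt_succ_self _)
        (fun t ht => by rw [Fin.le_def]; rw [Fin.lt_def] at ht; exact ht) hlt hrise ?_
      exact lt_of_le_of_lt (hjs' j) hrise
  have hRmono : ∀ n : ℕ, ∀ j j' : Fin s, jstar ≤ j → j ≤ j' → j'.1 - j.1 ≤ n →
      dg j ≤ dg j' := by
    intro n
    induction n with
    | zero =>
      intro j j' hj hjj h
      have hjeq : j = j' := Fin.ext (by rw [Fin.le_def] at hjj; omega)
      rw [hjeq]
    | succ n ih =>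
      intro j j' hj hjj h
      rcases eq_or_lt_of_le hjj with rfl | hlt
      · exact le_rfl
      · have hlt' : j.1 < j'.1 := by rwa [Fin.lt_def] at hlt
        have hv : j.1 + 1 < s := by have := j'.isLt; omega
        have h1 := hRcons j hj hv
        have h2 := ih ⟨j.1 + 1, hv⟩ j'
          (le_trans hj (by rw [Fin.le_def]; exact Nat.le_succ _))
          (by rw [Fin.le_def]; exact hlt')
          (by simp only [Fin.val_mk]; omega)
        exact le_trans h1 h2
  have hLmono : ∀ n : ℕ, ∀ j j' : Fin s, j ≤ j' → j' ≤ jstar → j'.1 - j.1 ≤ n →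
      dg j' ≤ dg j := by
    intro n
    induction n with
    | zero =>
      intro j j' hjj hj h
      have hjeq : j = j' := Fin.ext (by rw [Fin.le_def] at hjj; omega)
      rw [hjeq]
    | succ n ih =>
      intro j j' hjj hj h
      rcases eq_or_lt_of_le hjj with rfl | hlt
      · exact le_rfl
      · have hlt' : j.1 < j'.1 := by rwa [Fin.lt_def] at hlt
        have hv : j.1 + 1 < s := by have := j'.isLt; omega
        have hnext_le : (⟨j.1 + 1, hv⟩ : Fin s) ≤ jstar := by
          refine le_trans ?_ hj
          rw [Fin.le_def]
          exact hlt'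
        have h1 := hLcons j hv hnext_le
        have h2 := ih ⟨j.1 + 1, hv⟩ j'
          (by rw [Fin.le_def]; exact hlt')
          hj
          (by simp only [Fin.val_mk]; omega)
        exact le_trans h2 h1
  set κ : Fin s → Lex (ℕ × ℕ) := fun t =>
    toLex (dg t, if t < jstar then 2 * (jstar.1 - t.1) else 2 * (t.1 - jstar.1) + 1) with hκ
  have hκmin : ∀ t, κ jstar ≤ κ t := by
    intro t
    refine Prod.Lex.le_iff.2 ?_
    rcases eq_or_lt_of_le (hjs' t) with heq | hlt
    · refine Or.inr ⟨heq, ?_⟩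
      show (if jstar < jstar then 2 * (jstar.1 - jstar.1) else 2 * (jstar.1 - jstar.1) + 1) ≤ _
      rw [if_neg (lt_irrefl jstar)]
      show _ ≤ (if t < jstar then 2 * (jstar.1 - t.1) else 2 * (t.1 - jstar.1) + 1)
      have := Fin.lt_def (a := t) (b := jstar)
      split_ifs with hc
      · rw [Fin.lt_def] at hc
        omega
      · omega
    · exact Or.inl hlt
  have hκinj : Function.Injective κ := by
    intro t t' h
    have hsnd : (if t < jstar then 2 * (jstar.1 - t.1) else 2 * (t.1 - jstar.1) + 1) =
        (if t' < jstar then 2 * (jstar.1 - t'.1) else 2 * (t'.1 - jstar.1) + 1) :=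
      congrArg (fun x : Lex (ℕ × ℕ) => (ofLex x).2) h
    refine Fin.ext ?_
    split_ifs at hsnd with c1 c2 c2
    · rw [Fin.lt_def] at c1 c2
      omega
    · rw [Fin.lt_def] at c1
      rw [Fin.lt_def] at c2
      push_neg at c2
      omega
    · rw [Fin.lt_def] at c2
      rw [Fin.lt_def] at c1
      push_neg at c1
      omega
    · rw [Fin.lt_def] at c1 c2
      push_neg at c1 c2
      omega
  have hκR : ∀ t t' : Fin s, jstar ≤ t' → t' ≤ t → κ t' ≤ κ t := by
    intro t t' h1 h2
    have hdgle : dg t' ≤ dg t := hRmono (t.1 - t'.1) t' t h1 h2 le_rfl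
    refine Prod.Lex.le_iff.2 ?_
    rcases eq_or_lt_of_le hdgle with heq | hlt
    · refine Or.inr ⟨heq, ?_⟩
      show (if t' < jstar then 2 * (jstar.1 - t'.1) else 2 * (t'.1 - jstar.1) + 1) ≤
        (if t < jstar then 2 * (jstar.1 - t.1) else 2 * (t.1 - jstar.1) + 1)
      rw [if_neg (not_lt.2 h1), if_neg (not_lt.2 (le_trans h1 h2))]
      rw [Fin.le_def] at h1 h2
      omega
    · exact Or.inl hlt
  have hκL : ∀ t t' : Fin s, t ≤ t' → t' ≤ jstar → κ t' ≤ κ t := by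
    intro t t' h1 h2
    have hdgle : dg t' ≤ dg t := hLmono (t'.1 - t.1) t t' h1 h2 le_rfl
    refine Prod.Lex.le_iff.2 ?_
    rcases eq_or_lt_of_le hdgle with heq | hlt
    · refine Or.inr ⟨heq, ?_⟩
      show (if t' < jstar then 2 * (jstar.1 - t'.1) else 2 * (t'.1 - jstar.1) + 1) ≤
        (if t < jstar then 2 * (jstar.1 - t.1) else 2 * (t.1 - jstar.1) + 1)
      have hf1 := Fin.le_def.1 h1
      have hf2 := Fin.le_def.1 h2
      split_ifs with c1 c2 c2
      · rw [Fin.lt_def] at c1 c2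
        omega
      · rw [Fin.lt_def] at c1
        rw [Fin.lt_def] at c2
        push_neg at c2
        omega
      · rw [Fin.lt_def] at c2
        rw [Fin.lt_def] at c1
        push_neg at c1
        omega
      · rw [Fin.lt_def] at c1 c2
        push_neg at c1 c2
        omega
    · exact Or.inl hlt
  set σ := Tuple.sort κ with hσ
  have hσmono : Monotone (κ ∘ σ) := Tuple.monotone_sort κ
  have hσstrict : StrictMono (κ ∘ σ) :=
    hσmono.strictMono_of_injective (hκinj.comp σ.injective)
  have hEinj : Function.Injective E := by
    intro i j hEeq
    rcases lt_trichotomy i j with hc | hc | hc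
    · have := hblt hc
      rw [hEeq] at this
      exact absurd this (lt_irrefl _)
    · exact hc
    · have := hblt hc
      rw [hEeq] at this
      exact absurd this (lt_irrefl _)
  refine ⟨s, fun j => monomial (E (σ j)) (1:k), ?_, ?_, ?_, ?_⟩
  · intro i j h
    have hEeq : E (σ i) = E (σ j) :=
      monomial_left_injective (one_ne_zero : (1:k) ≠ 0) h
    exact σ.injective (hEinj hEeq)
  · have h1 : Set.range (fun j : Fin s => monomial (E (σ j)) (1:k)) =
        (fun a => monomial a (1:k)) '' Set.range (fun j : Fin s => E (σ j)) := by
      rw [show (fun j : Fin s => monomial (E (σ j)) (1:k)) =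
        (fun a => monomial a (1:k)) ∘ (fun j : Fin s => E (σ j)) from rfl, Set.range_comp]
    have h2 : Set.range (fun j : Fin s => E (σ j)) = Set.range E :=
      σ.surjective.range_comp E
    have h3 : Set.range E = S := by
      apply Set.eq_of_subset_of_subset
      · rintro x ⟨j, rfl⟩
        exact hES j
      · intro a haS
        obtain ⟨j, hj⟩ := hEsurj a haS
        exact ⟨j, hj⟩
    rw [h1, h2, h3]
    rfl
  · intro i j hij
    have hk := hσmono hij
    have hk' : toLex (dg (σ i), if σ i < jstar then 2 * (jstar.1 - (σ i).1)
          else 2 * ((σ i).1 - jstar.1) + 1) ≤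
        toLex (dg (σ j), if σ j < jstar then 2 * (jstar.1 - (σ j).1)
          else 2 * ((σ j).1 - jstar.1) + 1) := hk
    have hdgle : dg (σ i) ≤ dg (σ j) := by
      rcases Prod.Lex.le_iff.1 hk' with h | h
      · exact le_of_lt h
      · exact le_of_eq h.1
    have htd : ∀ t : Fin s, (monomial (E t) (1:k)).totalDegree = dg t := by
      intro t
      rw [totalDegree_monomial _ (one_ne_zero : (1:k) ≠ 0)]
      rw [show ((E t).sum fun _ e => e) = (E t).degree from rfl, degree_two]
    show (monomial (E (σ i)) (1:k)).totalDegree ≤ (monomial (E (σ j)) (1:k)).totalDegree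
    rw [htd, htd]
    exact hdgle
  · intro j
    set T : Set (Fin s) := σ '' {l | l ≤ j} with hT
    set Tfin : Finset (Fin s) := (Finset.Iic j).image σ with hTfinDef
    have hmemT : ∀ t, t ∈ Tfin ↔ t ∈ T := by
      intro t
      rw [hTfinDef, hT]
      simp only [Finset.mem_image, Finset.mem_Iic, Set.mem_image, Set.mem_setOf_eq]
    have hTfne : Tfin.Nonempty := ⟨σ j, Finset.mem_image_of_mem _ (Finset.mem_Iic.2 le_rfl)⟩
    have hloT : Tfin.min' hTfne ∈ T := (hmemT _).1 (Tfin.min'_mem hTfne)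
    have hhiT : Tfin.max' hTfne ∈ T := (hmemT _).1 (Tfin.max'_mem hTfne)
    have hTlo : ∀ t ∈ T, Tfin.min' hTfne ≤ t := fun t ht => Tfin.min'_le t ((hmemT t).2 ht)
    have hThi : ∀ t ∈ T, t ≤ Tfin.max' hTfne := fun t ht => Tfin.le_max' t ((hmemT t).2 ht)
    have hdc : ∀ t ∈ T, ∀ t', κ t' ≤ κ t → t' ∈ T := by
      rintro t ⟨i, hij', rfl⟩ t' hκle
      obtain ⟨i', rfl⟩ := σ.surjective t'
      have hii : i' ≤ i := by
        by_contra hc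
        push_neg at hc
        exact absurd hκle (not_le.2 (show κ (σ i) < κ (σ i') from hσstrict hc))
      exact ⟨i', le_trans hii hij', rfl⟩
    have hjstarT : jstar ∈ T := hdc (σ j) ⟨j, show j ≤ j from le_rfl, rfl⟩ jstar (hκmin _)
    have hTint : ∀ t : Fin s, Tfin.min' hTfne ≤ t → t ≤ Tfin.max' hTfne → t ∈ T := by
      intro t h1 h2
      rcases le_total t jstar with hc | hc
      · exact hdc _ hloT t (hκL _ t h1 hc)
      · exact hdc _ hhiT t (hκR _ t hc h2)
    have hseg := segment_full hGF hchar halt hblt T (Tfin.min' hTfne) (Tfin.max' hTfne)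
      hloT hhiT hTlo hThi hTint
    have himg : (fun a => monomial a (1:k)) '' (E '' T) =
        (fun l : Fin s => monomial (E (σ l)) (1:k)) '' {l | l ≤ j} := by
      rw [hT, Set.image_image, Set.image_image]
    rw [← himg]
    exact hseg


end
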